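/- Fix 0 < H < 1/2 and let D_t(x,h) = G_t(x+h) - G_t(x) with G_t the heat kernel, and F_t(x) = ∫_ℝ |D_t(x,h)|^2 |h|^{2H-2} dh. Then there is a constant C depending only on H with F_t(x) ≤ C · min( t^{H - 3/2}, t^{-1/2} |x|^{2H-2} ) for all t > 0 and x ∈ ℝ. -/

import Mathlib

open MeasureTheory Real Set

noncomputable def heatKernel (t x : ℝ) : ℝ :=
  (Real.sqrt (4 * Real.pi * t))⁻¹ * Real.exp (-x ^ 2 / (4 * t))

-- Lipschitz bound for exp(-·) on [m, ∞)
lemma exp_neg_lip {a b m : ℝ} (ha : m ≤ a) (hb : m ≤ b) :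
    |Real.exp (-a) - Real.exp (-b)| ≤ Real.exp (-m) * |a - b| := by
  wlog hab : b ≤ a generalizing a b
  · rw [abs_sub_comm, abs_sub_comm a b]; exact this hb ha (le_of_not_ge hab)
  have h1 : Real.exp (-a) ≤ Real.exp (-b) := Real.exp_le_exp.2 (by linarith)
  have h2 : Real.exp (-b) ≤ Real.exp (-m) := Real.exp_le_exp.2 (by linarith)
  rw [abs_sub_comm, abs_of_nonneg (by linarith), abs_of_nonneg (by linarith)]
  have key : Real.exp (-b) - Real.exp (-a) = Real.exp (-b) * (1 - Real.exp (-(a - b))) := by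
    rw [mul_sub, mul_one, ← Real.exp_add]; ring_nf
  rw [key]
  have h3 : 1 - Real.exp (-(a - b)) ≤ a - b := by
    have := Real.add_one_le_exp (-(a - b)); linarith
  calc Real.exp (-b) * (1 - Real.exp (-(a - b))) ≤ Real.exp (-m) * (a - b) := by
        apply mul_le_mul h2 h3 ?_ (Real.exp_nonneg _)
        have := Real.exp_nonneg (-(a-b)); linarith [Real.exp_le_one_iff.2 (by linarith : -(a-b) ≤ 0)]
    _ = Real.exp (-m) * (a - b) := rfl

lemma hk_nonneg (t x : ℝ) : 0 ≤ heatKernel t x := by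
  unfold heatKernel; positivity

lemma sqrt4pit (t : ℝ) (ht : 0 < t) : Real.sqrt t ≤ Real.sqrt (4 * Real.pi * t) := by
  apply Real.sqrt_le_sqrt; nlinarith [Real.pi_gt_three]

lemma hk_le (t x : ℝ) (ht : 0 < t) : heatKernel t x ≤ (Real.sqrt t)⁻¹ := by
  unfold heatKernel
  have h1 : Real.exp (-x ^ 2 / (4 * t)) ≤ 1 := by
    apply Real.exp_le_one_iff.2; apply div_nonpos_of_nonpos_of_nonneg (by nlinarith [sq_nonneg x]) (by positivity)
  have h2 : (Real.sqrt (4 * Real.pi * t))⁻¹ ≤ (Real.sqrt t)⁻¹ := by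
    apply inv_anti₀ (Real.sqrt_pos.2 ht) (sqrt4pit t ht)
  calc (Real.sqrt (4 * Real.pi * t))⁻¹ * Real.exp (-x ^ 2 / (4 * t))
      ≤ (Real.sqrt (4 * Real.pi * t))⁻¹ * 1 := by
        apply mul_le_mul_of_nonneg_left h1; positivity
    _ ≤ (Real.sqrt t)⁻¹ := by rw [mul_one]; exact h2

lemma hk_incr (t x h m : ℝ) (ht : 0 < t) (hm : 0 ≤ m)
    (h1 : m ≤ (x + h) ^ 2 / (4 * t)) (h2 : m ≤ x ^ 2 / (4 * t)) :
    |heatKernel t (x + h) - heatKernel t x|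
      ≤ (Real.sqrt t)⁻¹ * (Real.exp (-m) * (|h| * (2 * |x| + |h|) / (4 * t))) := by
  unfold heatKernel
  rw [← mul_sub, abs_mul]
  have hA : |(Real.sqrt (4 * Real.pi * t))⁻¹| ≤ (Real.sqrt t)⁻¹ := by
    rw [abs_of_nonneg (by positivity)]
    exact inv_anti₀ (Real.sqrt_pos.2 ht) (sqrt4pit t ht)
  have hB : |Real.exp (-(x + h) ^ 2 / (4 * t)) - Real.exp (-x ^ 2 / (4 * t))|
      ≤ Real.exp (-m) * (|h| * (2 * |x| + |h|) / (4 * t)) := by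
    have e1 : -(x + h) ^ 2 / (4 * t) = -((x + h) ^ 2 / (4 * t)) := by ring
    have e2 : -x ^ 2 / (4 * t) = -(x ^ 2 / (4 * t)) := by ring
    rw [e1, e2]
    calc |Real.exp (-((x + h) ^ 2 / (4 * t))) - Real.exp (-(x ^ 2 / (4 * t)))|
        ≤ Real.exp (-m) * |(x + h) ^ 2 / (4 * t) - x ^ 2 / (4 * t)| := exp_neg_lip h1 h2
      _ ≤ Real.exp (-m) * (|h| * (2 * |x| + |h|) / (4 * t)) := by
          apply mul_le_mul_of_nonneg_left ?_ (Real.exp_nonneg _)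
          have : (x + h) ^ 2 / (4 * t) - x ^ 2 / (4 * t) = h * (2 * x + h) / (4 * t) := by
            field_simp; ring
          rw [this, abs_div, abs_of_nonneg (by positivity : (0:ℝ) ≤ 4 * t), abs_mul]
          apply div_le_div_of_nonneg_right ?_ (by positivity)
          apply mul_le_mul_of_nonneg_left ?_ (abs_nonneg h)
          calc |2 * x + h| ≤ |2 * x| + |h| := abs_add_le _ _
            _ = 2 * |x| + |h| := by rw [abs_mul, abs_two]
  calc |(Real.sqrt (4 * Real.pi * t))⁻¹| * |Real.exp (-(x + h) ^ 2 / (4 * t)) - Real.exp (-x ^ 2 / (4 * t))|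
      ≤ (Real.sqrt t)⁻¹ * (Real.exp (-m) * (|h| * (2 * |x| + |h|) / (4 * t))) := by
        apply mul_le_mul hA hB (abs_nonneg _) (by positivity)

lemma lint_inner {p s : ℝ} (hp : 0 ≤ p) (hs : 0 < s) :
    ∫⁻ h : ℝ in {h : ℝ | |h| ≤ s}, ENNReal.ofReal (|h| ^ p)
      ≤ ENNReal.ofReal (2 * s ^ (p + 1)) := by
  have hset : {h : ℝ | |h| ≤ s} = Icc (-s) s := by ext h; simp [abs_le]
  calc ∫⁻ h : ℝ in {h : ℝ | |h| ≤ s}, ENNReal.ofReal (|h| ^ p)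
      ≤ ∫⁻ _ in {h : ℝ | |h| ≤ s}, ENNReal.ofReal (s ^ p) := by
        apply setLIntegral_mono' (by rw [hset]; exact measurableSet_Icc)
        intro h hh
        exact ENNReal.ofReal_le_ofReal (Real.rpow_le_rpow (abs_nonneg _) hh hp)
    _ = ENNReal.ofReal (s ^ p) * volume {h : ℝ | |h| ≤ s} := setLIntegral_const _ _
    _ = ENNReal.ofReal (s ^ p) * ENNReal.ofReal (2 * s) := by
        rw [hset, Real.volume_Icc]; congr 1; ring
    _ = ENNReal.ofReal (2 * s ^ (p + 1)) := by
        rw [← ENNReal.ofReal_mul (Real.rpow_nonneg hs.le _)]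
        congr 1; rw [Real.rpow_add_one hs.ne']; ring

lemma lint_outer {p r : ℝ} (hp : p < -1) (hr : 0 < r) :
    ∫⁻ h : ℝ in {h : ℝ | r < |h|}, ENNReal.ofReal (|h| ^ p)
      ≤ ENNReal.ofReal (2 * (r ^ (p + 1) / (-(p + 1)))) := by
  have hIoi : ∫⁻ h : ℝ in Ioi r, ENNReal.ofReal (|h| ^ p)
      = ENNReal.ofReal (r ^ (p + 1) / (-(p + 1))) := by
    have hint : IntegrableOn (fun h : ℝ => h ^ p) (Ioi r) := integrableOn_Ioi_rpow_of_lt hp hr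
    have hcong : ∫⁻ h : ℝ in Ioi r, ENNReal.ofReal (|h| ^ p)
        = ∫⁻ h : ℝ in Ioi r, ENNReal.ofReal (h ^ p) := by
      apply setLIntegral_congr_fun measurableSet_Ioi
      intro h hh
      simp only [abs_of_pos (hr.trans hh)]
    have hnn : 0 ≤ᵐ[volume.restrict (Ioi r)] fun h : ℝ => h ^ p := by
      filter_upwards [ae_restrict_mem measurableSet_Ioi] with h hh
      exact Real.rpow_nonneg (le_of_lt (hr.trans hh)) _
    rw [hcong, ← ofReal_integral_eq_lintegral_ofReal hint hnn,
      integral_Ioi_rpow_of_lt hp hr, div_neg, neg_div]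
  have hneg : ∫⁻ h : ℝ in Iio (-r), ENNReal.ofReal (|h| ^ p)
      = ∫⁻ h : ℝ in Ioi r, ENNReal.ofReal (|h| ^ p) := by
    have hmp : MeasurePreserving (fun x : ℝ => -x) volume volume :=
      Measure.measurePreserving_neg _
    have hemb : MeasurableEmbedding (fun x : ℝ => -x) :=
      (Homeomorph.neg ℝ).measurableEmbedding
    have key := hmp.setLIntegral_comp_preimage_emb hemb
      (fun h => ENNReal.ofReal (|h| ^ p)) (Iio (-r))
    have hpre : (fun x : ℝ => -x) ⁻¹' (Iio (-r)) = Ioi r := by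
      ext y; simp [neg_lt_neg_iff]
    rw [hpre] at key
    rw [← key]
    apply lintegral_congr; intro h; rw [abs_neg]
  have hsub : {h : ℝ | r < |h|} ⊆ Iio (-r) ∪ Ioi r := by
    intro h hh
    simp only [mem_setOf_eq] at hh
    rcases lt_abs.1 hh with h1 | h1
    · exact Or.inr h1
    · exact Or.inl (by simpa [lt_neg] using h1)
  calc ∫⁻ h : ℝ in {h : ℝ | r < |h|}, ENNReal.ofReal (|h| ^ p)
      ≤ ∫⁻ h : ℝ in Iio (-r) ∪ Ioi r, ENNReal.ofReal (|h| ^ p) :=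
        lintegral_mono_set hsub
    _ ≤ (∫⁻ h : ℝ in Iio (-r), ENNReal.ofReal (|h| ^ p))
        + ∫⁻ h : ℝ in Ioi r, ENNReal.ofReal (|h| ^ p) := lintegral_union_le _ _ _
    _ = ENNReal.ofReal (r ^ (p + 1) / (-(p + 1))) + ENNReal.ofReal (r ^ (p + 1) / (-(p + 1))) := by
        rw [hneg, hIoi]
    _ = ENNReal.ofReal (2 * (r ^ (p + 1) / (-(p + 1)))) := by
        have hq : 0 ≤ r ^ (p + 1) / (-(p + 1)) :=
          div_nonneg (Real.rpow_nonneg hr.le _) (by linarith)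
        rw [← ENNReal.ofReal_add hq hq]; congr 1; ring
  
lemma lint_gauss (t x : ℝ) (ht : 0 < t) :
    ∫⁻ h : ℝ, ENNReal.ofReal (Real.exp (-(x + h) ^ 2 / (2 * t)))
      ≤ ENNReal.ofReal (3 * Real.sqrt t) := by
  have htr : ∫⁻ h : ℝ, ENNReal.ofReal (Real.exp (-(x + h) ^ 2 / (2 * t)))
      = ∫⁻ h : ℝ, ENNReal.ofReal (Real.exp (-h ^ 2 / (2 * t))) :=
    lintegral_add_left_eq_self (fun h => ENNReal.ofReal (Real.exp (-h ^ 2 / (2 * t)))) x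
  have hint : Integrable (fun h : ℝ => Real.exp (-(2 * t)⁻¹ * h ^ 2)) :=
    integrable_exp_neg_mul_sq (by positivity)
  have heq : ∫⁻ h : ℝ, ENNReal.ofReal (Real.exp (-h ^ 2 / (2 * t)))
      = ENNReal.ofReal (∫ h : ℝ, Real.exp (-(2 * t)⁻¹ * h ^ 2)) := by
    rw [ofReal_integral_eq_lintegral_ofReal hint (ae_of_all _ fun h => Real.exp_nonneg _)]
    apply lintegral_congr; intro h
    rw [show -h ^ 2 / (2 * t) = -(2 * t)⁻¹ * h ^ 2 by field_simp]
  rw [htr, heq, integral_gaussian]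
  apply ENNReal.ofReal_le_ofReal
  rw [show π / (2 * t)⁻¹ = π * (2 * t) by field_simp]
  calc Real.sqrt (π * (2 * t)) ≤ Real.sqrt (9 * t) := by
        apply Real.sqrt_le_sqrt; nlinarith [Real.pi_le_four, ht]
    _ = 3 * Real.sqrt t := by
        rw [show (9 : ℝ) * t = 3 ^ 2 * t by ring, Real.sqrt_mul (by norm_num) t,
          Real.sqrt_sq (by norm_num)]

lemma poly_exp5 (v : ℝ) (hv : 0 ≤ v) : v ^ 5 * Real.exp (-(v ^ 2 / 8)) ≤ 30000 := by
  set E := Real.exp (v ^ 2 / 8) with hE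
  have hEpos : 0 < E := Real.exp_pos _
  have hE1 : 1 ≤ E := Real.one_le_exp (by positivity)
  have h1 : v ^ 2 / 8 / 3 + 1 ≤ Real.exp (v ^ 2 / 8 / 3) := Real.add_one_le_exp _
  have h2 : (v ^ 2 / 24) ^ 3 ≤ Real.exp (v ^ 2 / 8 / 3) ^ 3 :=
    pow_le_pow_left₀ (by positivity) (by linarith) 3
  have h3 : Real.exp (v ^ 2 / 8 / 3) ^ 3 = E := by
    rw [hE, ← Real.exp_nat_mul]; congr 1; push_cast; ring
  have h4 : v ^ 6 ≤ 13824 * E := by nlinarith [h2, h3]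
  have h5 : v ^ 5 ≤ v ^ 6 + 1 := by
    rcases le_total v 1 with hv1 | hv1
    · have : v ^ 5 ≤ 1 := pow_le_one₀ hv hv1
      nlinarith [pow_nonneg hv 6]
    · have : v ^ 5 ≤ v ^ 6 := pow_le_pow_right₀ hv1 (by norm_num)
      linarith
  have h6 : v ^ 5 ≤ 13825 * E := by linarith
  have h7 : Real.exp (-(v ^ 2 / 8)) = E⁻¹ := by rw [hE, ← Real.exp_neg]
  rw [h7]
  calc v ^ 5 * E⁻¹ ≤ 13825 * E * E⁻¹ :=
        mul_le_mul_of_nonneg_right h6 (by positivity)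
    _ = 13825 := by rw [mul_assoc, mul_inv_cancel₀ hEpos.ne', mul_one]
    _ ≤ 30000 := by norm_num

lemma lin_exp (v : ℝ) (hv : 0 ≤ v) : v * Real.exp (-(v ^ 2 / 2)) ≤ 1 := by
  set E := Real.exp (v ^ 2 / 2) with hE
  have hEpos : 0 < E := Real.exp_pos _
  have h1 : v ^ 2 / 2 + 1 ≤ E := Real.add_one_le_exp _
  have h2 : v ≤ E := by nlinarith [sq_nonneg (v - 1)]
  have h7 : Real.exp (-(v ^ 2 / 2)) = E⁻¹ := by rw [hE, ← Real.exp_neg]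
  rw [h7]
  calc v * E⁻¹ ≤ E * E⁻¹ := mul_le_mul_of_nonneg_right h2 (by positivity)
    _ = 1 := mul_inv_cancel₀ hEpos.ne'

lemma hk_sq (t y : ℝ) (ht : 0 < t) :
    heatKernel t y ^ 2 ≤ t⁻¹ * Real.exp (-y ^ 2 / (2 * t)) := by
  unfold heatKernel
  rw [mul_pow, ← Real.exp_nat_mul]
  have h1 : ((Real.sqrt (4 * Real.pi * t))⁻¹) ^ 2 ≤ t⁻¹ := by
    rw [inv_pow, Real.sq_sqrt (by positivity)]
    apply inv_anti₀ ht
    nlinarith [Real.pi_gt_three]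
  have h2 : Real.exp ((2:ℕ) * (-y ^ 2 / (4 * t))) = Real.exp (-y ^ 2 / (2 * t)) := by
    congr 1; push_cast; field_simp; ring
  rw [h2]
  exact mul_le_mul_of_nonneg_right h1 (Real.exp_nonneg _) |>.trans_eq rfl

lemma abs_rpow_mul (h : ℝ) {q : ℝ} (hq : q + 2 ≠ 0) : |h| ^ 2 * |h| ^ q = |h| ^ (q + 2) := by
  rcases eq_or_ne h 0 with rfl | hne
  · rw [abs_zero, Real.zero_rpow hq]
    norm_num
  · rw [← Real.rpow_natCast |h| 2, ← Real.rpow_add (abs_pos.2 hne)]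
    congr 1; push_cast; ring

set_option maxHeartbeats 1000000 in
theorem stmt7 (H : ℝ) (hH : H ∈ Set.Ioo (0 : ℝ) (1 / 2)) :
    ∃ C : ℝ, 0 < C ∧ ∀ t : ℝ, 0 < t → ∀ x : ℝ,
      (∫⁻ h : ℝ, ENNReal.ofReal
          (|heatKernel t (x + h) - heatKernel t x| ^ 2 * |h| ^ (2 * H - 2)))
        ≤ ENNReal.ofReal
            (C * t ^ (H - 3 / 2) * (max 1 (|x| / Real.sqrt t)) ^ (2 * H - 2)) := by
  obtain ⟨hH0, hH2⟩ := hH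
  have h12 : 0 < 1 - 2 * H := by linarith
  refine ⟨1000000 / (1 - 2 * H), div_pos (by norm_num) h12, ?_⟩
  intro t ht x
  set C : ℝ := 1000000 / (1 - 2 * H) with hC
  have hCpos : 0 < C := div_pos (by norm_num) h12
  set s := Real.sqrt t with hsdef
  have hs : 0 < s := Real.sqrt_pos.2 ht
  have hs2 : s ^ 2 = t := Real.sq_sqrt ht.le
  set D : ℝ → ℝ := fun h => heatKernel t (x + h) - heatKernel t x with hD
  -- global sup bound
  have hDsup : ∀ h : ℝ, |D h| ≤ 2 * s⁻¹ := by
    intro h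
    calc |D h| ≤ |heatKernel t (x + h)| + |heatKernel t x| := abs_sub _ _
      _ ≤ s⁻¹ + s⁻¹ := by
          rw [abs_of_nonneg (hk_nonneg _ _), abs_of_nonneg (hk_nonneg _ _)]
          exact add_le_add (hk_le t _ ht) (hk_le t x ht)
      _ = 2 * s⁻¹ := by ring
  have hmul : ∀ h : ℝ, |h| ^ 2 * |h| ^ (2 * H - 2) = |h| ^ (2 * H) := by
    intro h
    rw [abs_rpow_mul h (by intro hc; apply (by linarith : (0:ℝ) < 2 * H).ne' ; linarith)]
    congr 1; ring
  rcases le_or_gt |x| s with hx | hx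
  · -- Case A : |x| ≤ √t
    have hmax : max 1 (|x| / s) = 1 := max_eq_left ((div_le_one hs).2 hx)
    rw [hmax, Real.one_rpow, mul_one]
    set S : Set ℝ := {h : ℝ | |h| ≤ s} with hSdef
    have hSm : MeasurableSet S := by
      have : S = Icc (-s) s := by ext h; simp [hSdef, abs_le]
      rw [this]; exact measurableSet_Icc
    have hScm : Sᶜ = {h : ℝ | s < |h|} := by ext h; simp [hSdef, not_le]
    -- inner bound
    have hInner : (∫⁻ h : ℝ in S, ENNReal.ofReal (|D h| ^ 2 * |h| ^ (2 * H - 2)))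
        ≤ ENNReal.ofReal (2 * t ^ (H - 3 / 2)) := by
      have hpt : ∀ h ∈ S, ENNReal.ofReal (|D h| ^ 2 * |h| ^ (2 * H - 2))
          ≤ ENNReal.ofReal ((t ^ 2)⁻¹ * |h| ^ (2 * H)) := by
        intro h hh
        simp only [hSdef, mem_setOf_eq] at hh
        apply ENNReal.ofReal_le_ofReal
        have hDle : |D h| ≤ |h| * t⁻¹ := by
          have h0 := hk_incr t x h 0 ht le_rfl (by positivity) (by positivity)
          rw [neg_zero, Real.exp_zero, one_mul, ← hsdef] at h0
          refine h0.trans ?_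
          have h1 : |h| * (2 * |x| + |h|) / (4 * t) ≤ |h| * (3 * s) / (4 * t) := by
            apply div_le_div_of_nonneg_right ?_ (by positivity)
            apply mul_le_mul_of_nonneg_left (by linarith) (abs_nonneg h)
          calc s⁻¹ * (|h| * (2 * |x| + |h|) / (4 * t)) ≤ s⁻¹ * (|h| * (3 * s) / (4 * t)) :=
                mul_le_mul_of_nonneg_left h1 (by positivity)
            _ = |h| * ((3 / 4) * t⁻¹) := by field_simp
            _ ≤ |h| * (1 * t⁻¹) := by
                apply mul_le_mul_of_nonneg_left ?_ (abs_nonneg h)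
                apply mul_le_mul_of_nonneg_right (by norm_num) (by positivity)
            _ = |h| * t⁻¹ := by ring
        have hD2 : |D h| ^ 2 ≤ |h| ^ 2 * (t ^ 2)⁻¹ := by
          calc |D h| ^ 2 ≤ (|h| * t⁻¹) ^ 2 := pow_le_pow_left₀ (abs_nonneg _) hDle 2
            _ = |h| ^ 2 * (t ^ 2)⁻¹ := by rw [mul_pow, inv_pow]
        calc |D h| ^ 2 * |h| ^ (2 * H - 2) ≤ |h| ^ 2 * (t ^ 2)⁻¹ * |h| ^ (2 * H - 2) :=
              mul_le_mul_of_nonneg_right hD2 (Real.rpow_nonneg (abs_nonneg h) _)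
          _ = (t ^ 2)⁻¹ * (|h| ^ 2 * |h| ^ (2 * H - 2)) := by ring
          _ = (t ^ 2)⁻¹ * |h| ^ (2 * H) := by rw [hmul h]
      have e1 : s ^ (2 * H + 1) = t ^ ((2 * H + 1) / 2) := by
        rw [hsdef, Real.sqrt_eq_rpow, ← Real.rpow_mul ht.le]
        congr 1; ring
      have e2 : (t ^ 2)⁻¹ * (2 * s ^ (2 * H + 1)) = 2 * t ^ (H - 3 / 2) := by
        rw [e1, ← Real.rpow_natCast t 2, ← Real.rpow_neg ht.le, ← mul_assoc, mul_comm ((t:ℝ) ^ (-((2:ℕ):ℝ))) 2, mul_assoc, ← Real.rpow_add ht]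
        congr 2; push_cast; ring
      calc (∫⁻ h : ℝ in S, ENNReal.ofReal (|D h| ^ 2 * |h| ^ (2 * H - 2)))
          ≤ ∫⁻ h : ℝ in S, ENNReal.ofReal ((t ^ 2)⁻¹ * |h| ^ (2 * H)) := setLIntegral_mono' hSm hpt
        _ = ∫⁻ h : ℝ in S, ENNReal.ofReal ((t ^ 2)⁻¹) * ENNReal.ofReal (|h| ^ (2 * H)) := by
            apply lintegral_congr; intro h; rw [← ENNReal.ofReal_mul (by positivity)]
        _ = ENNReal.ofReal ((t ^ 2)⁻¹) * ∫⁻ h : ℝ in S, ENNReal.ofReal (|h| ^ (2 * H)) :=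
            lintegral_const_mul' _ _ ENNReal.ofReal_ne_top
        _ ≤ ENNReal.ofReal ((t ^ 2)⁻¹) * ENNReal.ofReal (2 * s ^ (2 * H + 1)) := by
            apply mul_le_mul_right
            exact lint_inner (by linarith) hs
        _ = ENNReal.ofReal ((t ^ 2)⁻¹ * (2 * s ^ (2 * H + 1))) :=
            (ENNReal.ofReal_mul (by positivity)).symm
        _ = ENNReal.ofReal (2 * t ^ (H - 3 / 2)) := by rw [e2]
    -- outer bound
    have hOuter : (∫⁻ h : ℝ in Sᶜ, ENNReal.ofReal (|D h| ^ 2 * |h| ^ (2 * H - 2)))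
        ≤ ENNReal.ofReal (8 / (1 - 2 * H) * t ^ (H - 3 / 2)) := by
      have hpt : ∀ h ∈ Sᶜ, ENNReal.ofReal (|D h| ^ 2 * |h| ^ (2 * H - 2))
          ≤ ENNReal.ofReal (4 * t⁻¹ * |h| ^ (2 * H - 2)) := by
        intro h _
        apply ENNReal.ofReal_le_ofReal
        apply mul_le_mul_of_nonneg_right ?_ (Real.rpow_nonneg (abs_nonneg h) _)
        calc |D h| ^ 2 ≤ (2 * s⁻¹) ^ 2 := pow_le_pow_left₀ (abs_nonneg _) (hDsup h) 2
          _ = 4 * (s ^ 2)⁻¹ := by rw [mul_pow, inv_pow]; norm_num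
          _ = 4 * t⁻¹ := by rw [hs2]
      have e1 : s ^ (2 * H - 2 + 1) = t ^ ((2 * H - 1) / 2) := by
        rw [hsdef, Real.sqrt_eq_rpow, ← Real.rpow_mul ht.le]
        congr 1; ring
      have e2 : 4 * t⁻¹ * (2 * (s ^ (2 * H - 2 + 1) / (-(2 * H - 2 + 1)))) =
          8 / (1 - 2 * H) * t ^ (H - 3 / 2) := by
        rw [e1, show -(2 * H - 2 + 1) = 1 - 2 * H by ring,
          ← Real.rpow_neg_one t, div_eq_mul_inv _ (1 - 2*H), div_eq_mul_inv (8:ℝ) _]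
        rw [mul_comm (t ^ ((2*H-1)/2)) (1 - 2*H)⁻¹]
        rw [show (4:ℝ) * t ^ (-1:ℝ) * (2 * ((1 - 2*H)⁻¹ * t ^ ((2*H-1)/2)))
            = 8 * (1-2*H)⁻¹ * (t ^ (-1:ℝ) * t ^ ((2*H-1)/2)) by ring, ← Real.rpow_add ht]
        congr 2; ring
      calc (∫⁻ h : ℝ in Sᶜ, ENNReal.ofReal (|D h| ^ 2 * |h| ^ (2 * H - 2)))
          ≤ ∫⁻ h : ℝ in Sᶜ, ENNReal.ofReal (4 * t⁻¹ * |h| ^ (2 * H - 2)) :=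
            setLIntegral_mono' hSm.compl hpt
        _ = ∫⁻ h : ℝ in Sᶜ, ENNReal.ofReal (4 * t⁻¹) * ENNReal.ofReal (|h| ^ (2 * H - 2)) := by
            apply lintegral_congr; intro h; rw [← ENNReal.ofReal_mul (by positivity)]
        _ = ENNReal.ofReal (4 * t⁻¹) * ∫⁻ h : ℝ in Sᶜ, ENNReal.ofReal (|h| ^ (2 * H - 2)) :=
            lintegral_const_mul' _ _ ENNReal.ofReal_ne_top
        _ ≤ ENNReal.ofReal (4 * t⁻¹) * ENNReal.ofReal (2 * (s ^ (2 * H - 2 + 1) / (-(2 * H - 2 + 1)))) := by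
            apply mul_le_mul_right
            rw [hScm]
            exact lint_outer (by linarith) hs
        _ = ENNReal.ofReal (4 * t⁻¹ * (2 * (s ^ (2 * H - 2 + 1) / (-(2 * H - 2 + 1))))) :=
            (ENNReal.ofReal_mul (by positivity)).symm
        _ = ENNReal.ofReal (8 / (1 - 2 * H) * t ^ (H - 3 / 2)) := by rw [e2]
    have hcoef : 2 + 8 / (1 - 2 * H) ≤ C := by
      rw [hC, show (2:ℝ) + 8 / (1 - 2 * H) = (2 * (1 - 2 * H) + 8) / (1 - 2 * H) by field_simp]
      gcongr
      nlinarith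
    calc (∫⁻ h : ℝ, ENNReal.ofReal (|D h| ^ 2 * |h| ^ (2 * H - 2)))
        = (∫⁻ h : ℝ in S, ENNReal.ofReal (|D h| ^ 2 * |h| ^ (2 * H - 2)))
          + ∫⁻ h : ℝ in Sᶜ, ENNReal.ofReal (|D h| ^ 2 * |h| ^ (2 * H - 2)) :=
          (lintegral_add_compl _ hSm).symm
      _ ≤ ENNReal.ofReal (2 * t ^ (H - 3 / 2)) + ENNReal.ofReal (8 / (1 - 2 * H) * t ^ (H - 3 / 2)) :=
          add_le_add hInner hOuter
      _ = ENNReal.ofReal ((2 + 8 / (1 - 2 * H)) * t ^ (H - 3 / 2)) := by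
          rw [← ENNReal.ofReal_add (by positivity) (mul_nonneg (by positivity) (Real.rpow_nonneg ht.le _))]
          congr 1; ring
      _ ≤ ENNReal.ofReal (C * t ^ (H - 3 / 2)) := by
          apply ENNReal.ofReal_le_ofReal
          exact mul_le_mul_of_nonneg_right hcoef (Real.rpow_nonneg ht.le _)
  · -- Case B : √t < |x|
    have hx0 : 0 < |x| := hs.trans hx
    set r : ℝ := |x| / 2 with hrdef
    have hr : 0 < r := by positivity
    have hmax : max 1 (|x| / s) = |x| / s := max_eq_right ((one_lt_div hs).2 hx).le
    set v : ℝ := |x| / s with hvdef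
    have hv1 : 1 < v := (one_lt_div hs).2 hx
    have hv0 : 0 ≤ v := by positivity
    have hxvs : |x| = v * s := by rw [hvdef]; field_simp
    have hv2 : v ^ 2 = x ^ 2 / t := by rw [hvdef, div_pow, sq_abs, hs2]
    have hrhs : C * t ^ (H - 3 / 2) * (|x| / s) ^ (2 * H - 2)
        = C * (s⁻¹ * |x| ^ (2 * H - 2)) := by
      have e1 : t ^ (H - 3 / 2) = s ^ (2 * H - 3 : ℝ) := by
        rw [← hs2, ← Real.rpow_natCast s 2, ← Real.rpow_mul hs.le]
        congr 1; push_cast; ring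
      rw [e1, Real.div_rpow (abs_nonneg x) hs.le,
        div_eq_mul_inv (|x| ^ (2 * H - 2)) _, ← Real.rpow_neg hs.le,
        show C * s ^ (2 * H - 3 : ℝ) * (|x| ^ (2 * H - 2) * s ^ (-(2 * H - 2)))
          = C * (s ^ (2 * H - 3 : ℝ) * s ^ (-(2 * H - 2)) * |x| ^ (2 * H - 2)) from by ring,
        ← Real.rpow_add hs, show (2 * H - 3) + -(2 * H - 2) = (-1 : ℝ) from by ring,
        Real.rpow_neg_one]
    rw [hmax, hrhs]
    set B0 : ℝ := s⁻¹ * |x| ^ (2 * H - 2) with hB0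
    have hB0nn : 0 ≤ B0 := mul_nonneg (inv_nonneg.2 hs.le) (Real.rpow_nonneg (abs_nonneg x) _)
    set S : Set ℝ := {h : ℝ | |h| ≤ r} with hSdef
    have hSm : MeasurableSet S := by
      have : S = Icc (-r) r := by ext h; simp [hSdef, abs_le]
      rw [this]; exact measurableSet_Icc
    have hScm : Sᶜ = {h : ℝ | r < |h|} := by ext h; simp [hSdef, not_le]
    set E : ℝ := Real.exp (-(x ^ 2 / (8 * t))) with hEdef
    have hEnn : 0 ≤ E := Real.exp_nonneg _
    set K : ℝ := (t ^ 3)⁻¹ * x ^ 2 * E with hKdef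
    have hKnn : 0 ≤ K := by positivity
    have hts : t⁻¹ * s = s⁻¹ := by rw [← hs2]; field_simp
    have hrp : r ^ (2 * H - 2) ≤ 4 * |x| ^ (2 * H - 2) := by
      have h1 : r ^ (2 * H - 2) = |x| ^ (2 * H - 2) / 2 ^ (2 * H - 2 : ℝ) := by
        rw [hrdef, Real.div_rpow (abs_nonneg x) (by norm_num)]
      have h2 : (1 / 4 : ℝ) ≤ 2 ^ (2 * H - 2 : ℝ) := by
        have h3 : (2 : ℝ) ^ (-2 : ℝ) ≤ 2 ^ (2 * H - 2 : ℝ) :=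
          Real.rpow_le_rpow_of_exponent_le (by norm_num) (by linarith)
        rw [show (-2 : ℝ) = -((2 : ℕ) : ℝ) from by norm_num, Real.rpow_neg (by norm_num),
          Real.rpow_natCast] at h3
        norm_num at h3
        linarith
      rw [h1]
      calc |x| ^ (2 * H - 2) / 2 ^ (2 * H - 2 : ℝ) ≤ |x| ^ (2 * H - 2) / (1 / 4) :=
            div_le_div_of_nonneg_left (Real.rpow_nonneg (abs_nonneg x) _) (by norm_num) h2
        _ = 4 * |x| ^ (2 * H - 2) := by ring
    -- Inner bound
    have hInner : (∫⁻ h : ℝ in S, ENNReal.ofReal (|D h| ^ 2 * |h| ^ (2 * H - 2)))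
        ≤ ENNReal.ofReal (60000 * B0) := by
      have hpt : ∀ h ∈ S, ENNReal.ofReal (|D h| ^ 2 * |h| ^ (2 * H - 2))
          ≤ ENNReal.ofReal (K * |h| ^ (2 * H)) := by
        intro h hh
        simp only [hSdef, mem_setOf_eq] at hh
        apply ENNReal.ofReal_le_ofReal
        set m : ℝ := x ^ 2 / (16 * t) with hmdef
        have hm0 : 0 ≤ m := by positivity
        have hxh : |x| / 2 ≤ |x + h| := by
          have h1 : |x| ≤ |x + h| + |h| := by
            calc |x| = |x + h + -h| := by ring_nf
              _ ≤ |x + h| + |(-h)| := abs_add_le _ _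
              _ = |x + h| + |h| := by rw [abs_neg]
          have h4 : |h| ≤ |x| / 2 := by rw [hrdef] at hh; exact hh
          linarith
        have hm1 : m ≤ (x + h) ^ 2 / (4 * t) := by
          rw [hmdef, div_le_div_iff₀ (by positivity) (by positivity)]
          have h2 : (|x| / 2) ^ 2 ≤ |x + h| ^ 2 := pow_le_pow_left₀ (by positivity) hxh 2
          have h5 : x ^ 2 / 4 ≤ |x + h| ^ 2 := by nlinarith [sq_abs x]
          rw [← sq_abs (x + h)]
          linarith [mul_le_mul_of_nonneg_right h5 ht.le]
        have hm2 : m ≤ x ^ 2 / (4 * t) := by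
          rw [hmdef, div_le_div_iff₀ (by positivity) (by positivity)]
          linarith [mul_nonneg (sq_nonneg x) ht.le]
        have h0 := hk_incr t x h m ht hm0 hm1 hm2
        rw [← hsdef] at h0
        have hDle : |D h| ≤ s⁻¹ * (Real.exp (-m) * (|h| * |x| / t)) := by
          refine h0.trans ?_
          apply mul_le_mul_of_nonneg_left ?_ (by positivity)
          apply mul_le_mul_of_nonneg_left ?_ (Real.exp_nonneg _)
          rw [div_le_div_iff₀ (by positivity) (by positivity)]
          have h3 : |h| * (2 * |x| + |h|) ≤ |h| * (4 * |x|) := by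
            apply mul_le_mul_of_nonneg_left ?_ (abs_nonneg h)
            rw [hrdef] at hh; linarith
          linarith [mul_le_mul_of_nonneg_right h3 ht.le]
        have hsq : Real.exp (-m) ^ 2 = E := by
          rw [hEdef, ← Real.exp_nat_mul]
          congr 1; rw [hmdef]; push_cast; ring
        have hD2 : |D h| ^ 2 ≤ K * |h| ^ 2 := by
          calc |D h| ^ 2 ≤ (s⁻¹ * (Real.exp (-m) * (|h| * |x| / t))) ^ 2 :=
                pow_le_pow_left₀ (abs_nonneg _) hDle 2
            _ = (s ^ 2)⁻¹ * (Real.exp (-m) ^ 2 * (|h| ^ 2 * |x| ^ 2 / t ^ 2)) := by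
                rw [mul_pow, mul_pow, div_pow, mul_pow, inv_pow]
            _ = K * |h| ^ 2 := by
                rw [hs2, hsq, sq_abs x, hKdef]
                field_simp
        calc |D h| ^ 2 * |h| ^ (2 * H - 2) ≤ K * |h| ^ 2 * |h| ^ (2 * H - 2) :=
              mul_le_mul_of_nonneg_right hD2 (Real.rpow_nonneg (abs_nonneg h) _)
          _ = K * (|h| ^ 2 * |h| ^ (2 * H - 2)) := by ring
          _ = K * |h| ^ (2 * H) := by rw [hmul h]
      have hx5 : x ^ 2 * |x| ^ (3 : ℕ) = v ^ 5 * s ^ 5 := by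
        rw [show x ^ 2 = |x| ^ 2 from (sq_abs x).symm, hxvs]; ring
      have hEv : E = Real.exp (-(v ^ 2 / 8)) := by
        rw [hEdef]; congr 1; rw [hv2]; ring
      have hcore : 2 * ((t ^ 3)⁻¹ * x ^ 2 * |x| ^ (3 : ℕ) * E) ≤ 60000 * s⁻¹ := by
        have ht3 : (t ^ 3)⁻¹ = (s ^ 6)⁻¹ := by rw [← hs2]; ring_nf
        calc 2 * ((t ^ 3)⁻¹ * x ^ 2 * |x| ^ (3 : ℕ) * E)
            = 2 * ((s ^ 6)⁻¹ * (x ^ 2 * |x| ^ (3 : ℕ)) * E) := by rw [ht3]; ring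
          _ = 2 * ((s ^ 6)⁻¹ * (v ^ 5 * s ^ 5) * E) := by rw [hx5]
          _ = 2 * (v ^ 5 * Real.exp (-(v ^ 2 / 8))) * s⁻¹ := by rw [hEv]; field_simp
          _ ≤ 2 * 30000 * s⁻¹ := by
              apply mul_le_mul_of_nonneg_right ?_ (by positivity)
              apply mul_le_mul_of_nonneg_left (poly_exp5 v hv0) (by norm_num)
          _ = 60000 * s⁻¹ := by norm_num
      have hr5 : r ^ (2 * H + 1) ≤ |x| ^ (2 * H - 2) * |x| ^ (3 : ℕ) := by
        calc r ^ (2 * H + 1) ≤ |x| ^ (2 * H + 1) :=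
              Real.rpow_le_rpow hr.le (by rw [hrdef]; linarith) (by linarith)
          _ = |x| ^ (2 * H - 2) * |x| ^ (3 : ℕ) := by
              rw [← Real.rpow_natCast |x| 3, ← Real.rpow_add hx0]
              congr 1; push_cast; ring
      have hKfinal : K * (2 * r ^ (2 * H + 1)) ≤ 60000 * B0 := by
        calc K * (2 * r ^ (2 * H + 1)) ≤ K * (2 * (|x| ^ (2 * H - 2) * |x| ^ (3 : ℕ))) := by
              apply mul_le_mul_of_nonneg_left ?_ hKnn
              apply mul_le_mul_of_nonneg_left hr5 (by norm_num)
          _ = 2 * ((t ^ 3)⁻¹ * x ^ 2 * |x| ^ (3 : ℕ) * E) * |x| ^ (2 * H - 2) := by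
              rw [hKdef]; ring
          _ ≤ 60000 * s⁻¹ * |x| ^ (2 * H - 2) :=
              mul_le_mul_of_nonneg_right hcore (Real.rpow_nonneg (abs_nonneg x) _)
          _ = 60000 * B0 := by rw [hB0]; ring
      calc (∫⁻ h : ℝ in S, ENNReal.ofReal (|D h| ^ 2 * |h| ^ (2 * H - 2)))
          ≤ ∫⁻ h : ℝ in S, ENNReal.ofReal (K * |h| ^ (2 * H)) := setLIntegral_mono' hSm hpt
        _ = ∫⁻ h : ℝ in S, ENNReal.ofReal K * ENNReal.ofReal (|h| ^ (2 * H)) := by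
            apply lintegral_congr; intro h; rw [← ENNReal.ofReal_mul hKnn]
        _ = ENNReal.ofReal K * ∫⁻ h : ℝ in S, ENNReal.ofReal (|h| ^ (2 * H)) :=
            lintegral_const_mul' _ _ ENNReal.ofReal_ne_top
        _ ≤ ENNReal.ofReal K * ENNReal.ofReal (2 * r ^ (2 * H + 1)) := by
            apply mul_le_mul_right
            exact lint_inner (by linarith) hr
        _ = ENNReal.ofReal (K * (2 * r ^ (2 * H + 1))) := (ENNReal.ofReal_mul hKnn).symm
        _ ≤ ENNReal.ofReal (60000 * B0) := ENNReal.ofReal_le_ofReal hKfinal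
    -- Outer bound
    set E2 : ℝ := Real.exp (-x ^ 2 / (2 * t)) with hE2def
    have hE2nn : 0 ≤ E2 := Real.exp_nonneg _
    have hOuter : (∫⁻ h : ℝ in Sᶜ, ENNReal.ofReal (|D h| ^ 2 * |h| ^ (2 * H - 2)))
        ≤ ENNReal.ofReal (24 * B0) + ENNReal.ofReal (8 / (1 - 2 * H) * B0) := by
      have hpt : ∀ h ∈ Sᶜ, ENNReal.ofReal (|D h| ^ 2 * |h| ^ (2 * H - 2))
          ≤ ENNReal.ofReal ((2 * r ^ (2 * H - 2) * t⁻¹) * Real.exp (-(x + h) ^ 2 / (2 * t)))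
            + ENNReal.ofReal ((2 * t⁻¹ * E2) * |h| ^ (2 * H - 2)) := by
        intro h hh
        have hh' : r < |h| := by rw [hScm] at hh; exact hh
        rw [← ENNReal.ofReal_add (by positivity) (by positivity)]
        apply ENNReal.ofReal_le_ofReal
        have hsplit : |D h| ^ 2 ≤ 2 * heatKernel t (x + h) ^ 2 + 2 * heatKernel t x ^ 2 := by
          have hda : |D h| ^ 2 = (heatKernel t (x + h) - heatKernel t x) ^ 2 := sq_abs _
          rw [hda]
          nlinarith [sq_nonneg (heatKernel t (x + h) + heatKernel t x)]
        have hA := hk_sq t (x + h) ht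
        have hB := hk_sq t x ht
        have hhr : |h| ^ (2 * H - 2) ≤ r ^ (2 * H - 2) :=
          Real.rpow_le_rpow_of_nonpos hr hh'.le (by linarith)
        calc |D h| ^ 2 * |h| ^ (2 * H - 2)
            ≤ (2 * heatKernel t (x + h) ^ 2 + 2 * heatKernel t x ^ 2) * |h| ^ (2 * H - 2) :=
              mul_le_mul_of_nonneg_right hsplit (Real.rpow_nonneg (abs_nonneg h) _)
          _ = 2 * heatKernel t (x + h) ^ 2 * |h| ^ (2 * H - 2)
              + 2 * heatKernel t x ^ 2 * |h| ^ (2 * H - 2) := by ring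
          _ ≤ (2 * r ^ (2 * H - 2) * t⁻¹) * Real.exp (-(x + h) ^ 2 / (2 * t))
              + (2 * t⁻¹ * E2) * |h| ^ (2 * H - 2) := by
              apply add_le_add
              · calc 2 * heatKernel t (x + h) ^ 2 * |h| ^ (2 * H - 2)
                    ≤ (2 * (t⁻¹ * Real.exp (-(x + h) ^ 2 / (2 * t)))) * r ^ (2 * H - 2) := by
                      apply mul_le_mul (by linarith) hhr (Real.rpow_nonneg (abs_nonneg h) _) ?_
                      positivity
                  _ = (2 * r ^ (2 * H - 2) * t⁻¹) * Real.exp (-(x + h) ^ 2 / (2 * t)) := by ring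
              · have h2B : 2 * heatKernel t x ^ 2 ≤ 2 * t⁻¹ * E2 := by
                  rw [hE2def]; nlinarith [hB]
                exact mul_le_mul_of_nonneg_right h2B (Real.rpow_nonneg (abs_nonneg h) _)
      have hmeas1 : Measurable fun h : ℝ =>
          ENNReal.ofReal ((2 * r ^ (2 * H - 2) * t⁻¹) * Real.exp (-(x + h) ^ 2 / (2 * t))) := by
        fun_prop
      have hco1 : (2 * r ^ (2 * H - 2) * t⁻¹) * (3 * s) ≤ 24 * B0 := by
        calc (2 * r ^ (2 * H - 2) * t⁻¹) * (3 * s) = 6 * r ^ (2 * H - 2) * (t⁻¹ * s) := by ring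
          _ = 6 * r ^ (2 * H - 2) * s⁻¹ := by rw [hts]
          _ ≤ 6 * (4 * |x| ^ (2 * H - 2)) * s⁻¹ := by
              apply mul_le_mul_of_nonneg_right ?_ (by positivity)
              apply mul_le_mul_of_nonneg_left hrp (by norm_num)
          _ = 24 * B0 := by rw [hB0]; ring
      have hg1 : (∫⁻ h : ℝ in Sᶜ,
            ENNReal.ofReal ((2 * r ^ (2 * H - 2) * t⁻¹) * Real.exp (-(x + h) ^ 2 / (2 * t))))
          ≤ ENNReal.ofReal (24 * B0) := by
        calc (∫⁻ h : ℝ in Sᶜ,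
              ENNReal.ofReal ((2 * r ^ (2 * H - 2) * t⁻¹) * Real.exp (-(x + h) ^ 2 / (2 * t))))
            ≤ ∫⁻ h : ℝ,
              ENNReal.ofReal ((2 * r ^ (2 * H - 2) * t⁻¹) * Real.exp (-(x + h) ^ 2 / (2 * t))) :=
              setLIntegral_le_lintegral _ _
          _ = ENNReal.ofReal (2 * r ^ (2 * H - 2) * t⁻¹)
              * ∫⁻ h : ℝ, ENNReal.ofReal (Real.exp (-(x + h) ^ 2 / (2 * t))) := by
              rw [← lintegral_const_mul' _ _ ENNReal.ofReal_ne_top]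
              apply lintegral_congr; intro h; rw [← ENNReal.ofReal_mul (by positivity)]
          _ ≤ ENNReal.ofReal (2 * r ^ (2 * H - 2) * t⁻¹) * ENNReal.ofReal (3 * s) := by
              apply mul_le_mul_right
              exact lint_gauss t x ht
          _ = ENNReal.ofReal ((2 * r ^ (2 * H - 2) * t⁻¹) * (3 * s)) :=
              (ENNReal.ofReal_mul (by positivity)).symm
          _ ≤ ENNReal.ofReal (24 * B0) := ENNReal.ofReal_le_ofReal hco1
      have hE2v : E2 = Real.exp (-(v ^ 2 / 2)) := by
        rw [hE2def]; congr 1; rw [hv2]; ring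
      have hlin : t⁻¹ * |x| * E2 ≤ s⁻¹ := by
        rw [hE2v, hxvs]
        calc t⁻¹ * (v * s) * Real.exp (-(v ^ 2 / 2))
            = (v * Real.exp (-(v ^ 2 / 2))) * (t⁻¹ * s) := by ring
          _ ≤ 1 * (t⁻¹ * s) := by
              apply mul_le_mul_of_nonneg_right (lin_exp v hv0) ?_
              rw [hts]; positivity
          _ = s⁻¹ := by rw [hts, one_mul]
      have hterm : r ^ (2 * H - 2) * r ≤ 2 * (|x| ^ (2 * H - 2) * |x|) := by
        calc r ^ (2 * H - 2) * r ≤ (4 * |x| ^ (2 * H - 2)) * (|x| / 2) := by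
              apply mul_le_mul hrp (by rw [hrdef]) hr.le ?_
              positivity
          _ = 2 * (|x| ^ (2 * H - 2) * |x|) := by ring
      have hco2 : (2 * t⁻¹ * E2) * (2 * (r ^ (2 * H - 2 + 1) / (-(2 * H - 2 + 1))))
          ≤ 8 / (1 - 2 * H) * B0 := by
        rw [Real.rpow_add_one hr.ne' (2 * H - 2), show -(2 * H - 2 + 1) = 1 - 2 * H from by ring]
        have h4pos : (0:ℝ) ≤ 4 / (1 - 2 * H) := div_nonneg (by norm_num) h12.le
        have h8pos : (0:ℝ) ≤ 8 / (1 - 2 * H) := div_nonneg (by norm_num) h12.le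
        calc (2 * t⁻¹ * E2) * (2 * (r ^ (2 * H - 2) * r / (1 - 2 * H)))
            = (4 / (1 - 2 * H)) * (r ^ (2 * H - 2) * r) * (t⁻¹ * E2) := by ring
          _ ≤ (4 / (1 - 2 * H)) * (2 * (|x| ^ (2 * H - 2) * |x|)) * (t⁻¹ * E2) := by
              apply mul_le_mul_of_nonneg_right (mul_le_mul_of_nonneg_left hterm h4pos) ?_
              positivity
          _ = (8 / (1 - 2 * H)) * |x| ^ (2 * H - 2) * (t⁻¹ * |x| * E2) := by ring
          _ ≤ (8 / (1 - 2 * H)) * |x| ^ (2 * H - 2) * s⁻¹ := by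
              apply mul_le_mul_of_nonneg_left hlin ?_
              exact mul_nonneg h8pos (Real.rpow_nonneg (abs_nonneg x) _)
          _ = 8 / (1 - 2 * H) * B0 := by rw [hB0]; ring
      have hg2 : (∫⁻ h : ℝ in Sᶜ, ENNReal.ofReal ((2 * t⁻¹ * E2) * |h| ^ (2 * H - 2)))
          ≤ ENNReal.ofReal (8 / (1 - 2 * H) * B0) := by
        calc (∫⁻ h : ℝ in Sᶜ, ENNReal.ofReal ((2 * t⁻¹ * E2) * |h| ^ (2 * H - 2)))
            = ∫⁻ h : ℝ in Sᶜ, ENNReal.ofReal (2 * t⁻¹ * E2) * ENNReal.ofReal (|h| ^ (2 * H - 2)) := by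
              apply lintegral_congr; intro h; rw [← ENNReal.ofReal_mul (by positivity)]
          _ = ENNReal.ofReal (2 * t⁻¹ * E2) * ∫⁻ h : ℝ in Sᶜ, ENNReal.ofReal (|h| ^ (2 * H - 2)) :=
              lintegral_const_mul' _ _ ENNReal.ofReal_ne_top
          _ ≤ ENNReal.ofReal (2 * t⁻¹ * E2)
              * ENNReal.ofReal (2 * (r ^ (2 * H - 2 + 1) / (-(2 * H - 2 + 1)))) := by
              apply mul_le_mul_right
              rw [hScm]
              exact lint_outer (by linarith) hr
          _ = ENNReal.ofReal ((2 * t⁻¹ * E2) * (2 * (r ^ (2 * H - 2 + 1) / (-(2 * H - 2 + 1))))) :=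
              (ENNReal.ofReal_mul (by positivity)).symm
          _ ≤ ENNReal.ofReal (8 / (1 - 2 * H) * B0) := ENNReal.ofReal_le_ofReal hco2
      calc (∫⁻ h : ℝ in Sᶜ, ENNReal.ofReal (|D h| ^ 2 * |h| ^ (2 * H - 2)))
          ≤ ∫⁻ h : ℝ in Sᶜ,
            (ENNReal.ofReal ((2 * r ^ (2 * H - 2) * t⁻¹) * Real.exp (-(x + h) ^ 2 / (2 * t)))
              + ENNReal.ofReal ((2 * t⁻¹ * E2) * |h| ^ (2 * H - 2))) :=
            setLIntegral_mono' hSm.compl hpt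
        _ = (∫⁻ h : ℝ in Sᶜ,
              ENNReal.ofReal ((2 * r ^ (2 * H - 2) * t⁻¹) * Real.exp (-(x + h) ^ 2 / (2 * t))))
            + ∫⁻ h : ℝ in Sᶜ, ENNReal.ofReal ((2 * t⁻¹ * E2) * |h| ^ (2 * H - 2)) :=
            lintegral_add_left hmeas1 _
        _ ≤ ENNReal.ofReal (24 * B0) + ENNReal.ofReal (8 / (1 - 2 * H) * B0) := add_le_add hg1 hg2
    have hcoefB : 60000 + (24 + 8 / (1 - 2 * H)) ≤ C := by
      rw [hC, show (60000 : ℝ) + (24 + 8 / (1 - 2 * H)) = (60024 * (1 - 2 * H) + 8) / (1 - 2 * H)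
        from by field_simp; ring]
      gcongr
      nlinarith
    calc (∫⁻ h : ℝ, ENNReal.ofReal (|D h| ^ 2 * |h| ^ (2 * H - 2)))
        = (∫⁻ h : ℝ in S, ENNReal.ofReal (|D h| ^ 2 * |h| ^ (2 * H - 2)))
          + ∫⁻ h : ℝ in Sᶜ, ENNReal.ofReal (|D h| ^ 2 * |h| ^ (2 * H - 2)) :=
        (lintegral_add_compl _ hSm).symm
      _ ≤ ENNReal.ofReal (60000 * B0)
          + (ENNReal.ofReal (24 * B0) + ENNReal.ofReal (8 / (1 - 2 * H) * B0)) :=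
        add_le_add hInner hOuter
      _ = ENNReal.ofReal ((60000 + (24 + 8 / (1 - 2 * H))) * B0) := by
          rw [← ENNReal.ofReal_add (mul_nonneg (by norm_num) hB0nn)
              (mul_nonneg (div_nonneg (by norm_num) h12.le) hB0nn),
            ← ENNReal.ofReal_add (mul_nonneg (by norm_num) hB0nn)
              (add_nonneg (mul_nonneg (by norm_num) hB0nn)
                (mul_nonneg (div_nonneg (by norm_num) h12.le) hB0nn))]
          congr 1; ring
      _ ≤ ENNReal.ofReal (C * B0) :=
        ENNReal.ofReal_le_ofReal (mul_le_mul_of_nonneg_right hcoefB hB0nn)
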